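/- Let β be a q-bic form on V over k and X ⊂ P(V) the associated q-bic hypersurface. A first-order deformation of an isotropic subspace U ⊆ V, given by a linear map φ : U → V/U, keeps U isotropic over k[ε] if and only if φ factors through U^{[1],⊥}/U, where U^{[1],⊥} = {v ∈ V : β(u, v) = 0 for all u ∈ U}. Consequently, the tangent space of the Fano scheme of isotropic (r+1)-subspaces at [U] is isomorphic to Hom_k(U, U^{[1],⊥}/U). -/
import Mathlib


/-- a first-order deformation of an isotropic subspace U of a q-bic form,
given by a linear map φ : U → V/U (with lift φ̃ : U → V), keeps U isotropic over k[ε]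
(equivalently, β(u, φ̃(u')) = 0 for all u, u' ∈ U, since ε^q = 0) if and only if φ factors
through U^{[1],⊥}/U, where U^{[1],⊥} = {v ∈ V : β(u, v) = 0 for all u ∈ U}.  This identifies
the tangent space of the Fano scheme at [U] with Hom(U, U^{[1],⊥}/U). -/
theorem stmt_10 {p q ν : ℕ} [Fact p.Prime] (hν : 0 < ν) (hq : q = p ^ ν)
    {k : Type*} [Field k] [CharP k p]
    (hcontains : Nonempty (GaloisField p (2 * ν) →+* k))
    {V : Type*} [AddCommGroup V] [Module k V] [FiniteDimensional k V]
    (β : V → V → k)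
    (haddl : ∀ u v w : V, β (u + v) w = β u w + β v w)
    (haddr : ∀ u v w : V, β u (v + w) = β u v + β u w)
    (hsmull : ∀ (c : k) (u v : V), β (c • u) v = c ^ q * β u v)
    (hsmulr : ∀ (c : k) (u v : V), β u (c • v) = c * β u v)
    (U : Submodule k V)
    (hiso : ∀ u ∈ U, ∀ v ∈ U, β u v = 0)
    (φ : U →ₗ[k] V ⧸ U) (φt : U → V)
    (hlift : ∀ u : U, Submodule.Quotient.mk (φt u) = φ u) :
    (∀ u u' : U, β (u : V) (φt u') = 0) ↔
      ∀ u : U, ∃ v : V, (∀ w ∈ U, β w v = 0) ∧ Submodule.Quotient.mk v = φ u := by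
  constructor
  · intro h u
    exact ⟨φt u, fun w hw => h ⟨w, hw⟩ u, hlift u⟩
  · intro h u u'
    obtain ⟨v, hv, hvq⟩ := h u'
    have hdiff : φt u' - v ∈ U := by
      rw [← Submodule.Quotient.eq]
      rw [hvq, hlift]
    have : β (u : V) (φt u') = β (u : V) (v + (φt u' - v)) := by rw [add_sub_cancel]
    rw [this, haddr, hv u u.2, hiso u u.2 _ hdiff, add_zero]
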